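/- Let m ≥ 1 be an integer and let f : [0,∞) → ℂ be a continuous function. Then f belongs to 𝓕_w^m if and only if 𝓛^m f belongs to 𝓡_w. -/

import Mathlib

open MeasureTheory Real Set

noncomputable section

/-- The class `𝓡_w^c`: continuous functions on `[0,∞)` whose integral of the modulus up to `n`
is `≤ c₁ (n+1)^c e^{n/2}` for every integer `n ≥ 1`. -/
def memRwC (c : ℝ) (f : ℝ → ℂ) : Prop :=
  ContinuousOn f (Set.Ici 0) ∧
  ∃ c₁ : ℝ, 0 < c₁ ∧ ∀ n : ℕ, 1 ≤ n →
    (∫ s in (0:ℝ)..(n:ℝ), ‖f s‖) ≤ c₁ * ((n:ℝ) + 1) ^ c * Real.exp ((n:ℝ) / 2)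

/-- The class `𝓡_w = ⋃_{c ≥ 0} 𝓡_w^c`. -/
def memRw (f : ℝ → ℂ) : Prop := ∃ c : ℝ, 0 ≤ c ∧ memRwC c f

/-- The class `𝓕_w^m` of weak Friedman–Ramanujan functions with polynomial part of
degree `< m`. -/
def memFw (m : ℕ) (f : ℝ → ℂ) : Prop :=
  ContinuousOn f (Set.Ici 0) ∧
  ∃ p : Polynomial ℂ, p.degree < (m : ℕ) ∧
    memRw (fun ℓ : ℝ => f ℓ - p.eval (ℓ : ℂ) * Complex.exp ℓ)

/-- The primitive operator `𝒫 f (x) = ∫₀ˣ f(t) dt`. -/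
def Pop (f : ℝ → ℂ) : ℝ → ℂ := fun x => ∫ t in (0:ℝ)..x, f t

/-- The operator `𝓛 = Id − 𝒫`. -/
def Lop (f : ℝ → ℂ) : ℝ → ℂ := fun x => f x - Pop f x

namespace FRWork

open Polynomial Filter Topology intervalIntegral

lemma contPolyExp (p : ℂ[X]) : Continuous fun t : ℝ => p.eval (t:ℂ) * Complex.exp (t:ℂ) :=
  (p.continuous.comp Complex.continuous_ofReal).mul
    (Complex.continuous_exp.comp Complex.continuous_ofReal)

lemma contPop {f : ℝ → ℂ} (hf : Continuous f) : Continuous (Pop f) :=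
  intervalIntegral.continuous_primitive (fun a b => hf.intervalIntegrable a b) 0

lemma contLop {f : ℝ → ℂ} (hf : Continuous f) : Continuous (Lop f) := hf.sub (contPop hf)

/-- `memRw` with natural exponent. -/
lemma memRw_nat_iff {f : ℝ → ℂ} :
    memRw f ↔ ContinuousOn f (Set.Ici 0) ∧ ∃ k : ℕ, ∃ c₁ : ℝ, 0 < c₁ ∧ ∀ n : ℕ, 1 ≤ n →
      (∫ s in (0:ℝ)..(n:ℝ), ‖f s‖) ≤ c₁ * ((n:ℝ) + 1) ^ k * Real.exp ((n:ℝ) / 2) := by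
  constructor
  · rintro ⟨c, hc0, hcont, c₁, hc₁, hb⟩
    refine ⟨hcont, ⌈c⌉₊, c₁, hc₁, fun n hn => ?_⟩
    have h1 : (1:ℝ) ≤ (n:ℝ) + 1 := by
      have : (0:ℝ) ≤ (n:ℝ) := Nat.cast_nonneg n
      linarith
    have h2 : ((n:ℝ) + 1) ^ c ≤ ((n:ℝ) + 1) ^ (⌈c⌉₊ : ℕ) := by
      rw [← Real.rpow_natCast ((n:ℝ)+1) ⌈c⌉₊]
      exact Real.rpow_le_rpow_of_exponent_le h1 (Nat.le_ceil c)
    have hb' := hb n hn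
    refine hb'.trans ?_
    have : (0:ℝ) < Real.exp ((n:ℝ)/2) := Real.exp_pos _
    have := mul_le_mul_of_nonneg_left h2 hc₁.le
    exact mul_le_mul_of_nonneg_right this (Real.exp_pos _).le
  · rintro ⟨hcont, k, c₁, hc₁, hb⟩
    refine ⟨k, Nat.cast_nonneg k, hcont, c₁, hc₁, fun n hn => ?_⟩
    have hb' := hb n hn
    rw [Real.rpow_natCast]
    exact hb'

lemma memRw_continuousOn {f : ℝ → ℂ} (h : memRw f) : ContinuousOn f (Set.Ici 0) :=
  h.choose_spec.2.1


lemma integrable_norm_on {f : ℝ → ℂ} (hf : ContinuousOn f (Set.Ici 0)) {a b : ℝ}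
    (ha : 0 ≤ a) (hab : a ≤ b) :
    IntervalIntegrable (fun s => ‖f s‖) volume a b := by
  apply ContinuousOn.intervalIntegrable
  apply ContinuousOn.norm
  apply hf.mono
  rw [uIcc_of_le hab]
  exact fun x hx => le_trans ha hx.1

lemma eqOn_integral {f g : ℝ → ℂ} (h : Set.EqOn f g (Set.Ici 0)) {x : ℝ} (hx : 0 ≤ x) :
    ∫ t in (0:ℝ)..x, f t = ∫ t in (0:ℝ)..x, g t := by
  apply intervalIntegral.integral_congr
  intro t ht
  rw [uIcc_of_le hx] at ht
  exact h ht.1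

lemma Pop_eqOn {f g : ℝ → ℂ} (h : Set.EqOn f g (Set.Ici 0)) :
    Set.EqOn (Pop f) (Pop g) (Set.Ici 0) := fun x hx => eqOn_integral h hx

lemma Lop_eqOn {f g : ℝ → ℂ} (h : Set.EqOn f g (Set.Ici 0)) :
    Set.EqOn (Lop f) (Lop g) (Set.Ici 0) := by
  intro x hx
  simp only [Lop]
  rw [h hx, Pop_eqOn h hx]

lemma Lop_iter_eqOn {f g : ℝ → ℂ} (h : Set.EqOn f g (Set.Ici 0)) (m : ℕ) :
    Set.EqOn (Lop^[m] f) (Lop^[m] g) (Set.Ici 0) := by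
  induction m with
  | zero => simpa using h
  | succ n ih =>
      rw [Function.iterate_succ_apply', Function.iterate_succ_apply']
      exact Lop_eqOn ih

lemma memRw_congr {f g : ℝ → ℂ} (h : Set.EqOn f g (Set.Ici 0)) (hf : memRw f) : memRw g := by
  obtain ⟨c, hc0, hcont, c₁, hc₁, hb⟩ := hf
  refine ⟨c, hc0, hcont.congr h.symm, c₁, hc₁, fun n hn => ?_⟩
  have : ∫ s in (0:ℝ)..(n:ℝ), ‖g s‖ = ∫ s in (0:ℝ)..(n:ℝ), ‖f s‖ := by
    apply intervalIntegral.integral_congr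
    intro t ht
    rw [uIcc_of_le (by positivity : (0:ℝ) ≤ (n:ℝ))] at ht
    exact (congrArg (fun z : ℂ => ‖z‖) (h ht.1)).symm
  rw [this]; exact hb n hn

lemma memFw_congr {m : ℕ} {f g : ℝ → ℂ} (h : Set.EqOn f g (Set.Ici 0)) (hf : memFw m f) :
    memFw m g := by
  obtain ⟨hcont, p, hp, hr⟩ := hf
  refine ⟨hcont.congr h.symm, p, hp, memRw_congr (fun x hx => ?_) hr⟩
  simp only [h hx]

lemma memRw_add {f g : ℝ → ℂ} (hf : memRw f) (hg : memRw g) :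
    memRw (fun x => f x + g x) := by
  rw [memRw_nat_iff] at hf hg ⊢
  obtain ⟨hfc, k₁, c₁, hc₁, hb₁⟩ := hf
  obtain ⟨hgc, k₂, c₂, hc₂, hb₂⟩ := hg
  refine ⟨hfc.add hgc, max k₁ k₂, c₁ + c₂, by linarith, fun n hn => ?_⟩
  have h0n : (0:ℝ) ≤ (n:ℝ) := Nat.cast_nonneg n
  have h1 : (1:ℝ) ≤ (n:ℝ) + 1 := by linarith
  have key : (∫ s in (0:ℝ)..(n:ℝ), ‖f s + g s‖)
      ≤ (∫ s in (0:ℝ)..(n:ℝ), ‖f s‖) + ∫ s in (0:ℝ)..(n:ℝ), ‖g s‖ := by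
    rw [← intervalIntegral.integral_add (integrable_norm_on hfc le_rfl h0n)
      (integrable_norm_on hgc le_rfl h0n)]
    apply intervalIntegral.integral_mono_on h0n
    · apply ContinuousOn.intervalIntegrable
      apply ContinuousOn.norm
      apply (hfc.add hgc).mono
      rw [uIcc_of_le h0n]; exact fun x hx => hx.1
    · exact (integrable_norm_on hfc le_rfl h0n).add (integrable_norm_on hgc le_rfl h0n)
    · exact fun x _ => norm_add_le _ _
  refine key.trans ?_
  have e1 : ((n:ℝ)+1) ^ k₁ ≤ ((n:ℝ)+1) ^ (max k₁ k₂) := pow_le_pow_right₀ h1 (le_max_left _ _)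
  have e2 : ((n:ℝ)+1) ^ k₂ ≤ ((n:ℝ)+1) ^ (max k₁ k₂) := pow_le_pow_right₀ h1 (le_max_right _ _)
  have hexp : (0:ℝ) < Real.exp ((n:ℝ)/2) := Real.exp_pos _
  have A := (hb₁ n hn).trans (mul_le_mul_of_nonneg_right (mul_le_mul_of_nonneg_left e1 hc₁.le) hexp.le)
  have B := (hb₂ n hn).trans (mul_le_mul_of_nonneg_right (mul_le_mul_of_nonneg_left e2 hc₂.le) hexp.le)
  nlinarith

lemma memRw_neg {f : ℝ → ℂ} (hf : memRw f) : memRw (fun x => -f x) := by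
  obtain ⟨c, hc0, hcont, c₁, hc₁, hb⟩ := hf
  refine ⟨c, hc0, hcont.neg, c₁, hc₁, fun n hn => ?_⟩
  simpa only [norm_neg] using hb n hn

lemma memRw_const (a : ℂ) : memRw (fun _ => a) := by
  rw [memRw_nat_iff]
  refine ⟨continuous_const.continuousOn, 1, ‖a‖ + 1, by positivity, fun n hn => ?_⟩
  have h0n : (0:ℝ) ≤ (n:ℝ) := Nat.cast_nonneg n
  have : (∫ _ in (0:ℝ)..(n:ℝ), ‖a‖) = (n:ℝ) * ‖a‖ := by
    rw [intervalIntegral.integral_const, smul_eq_mul, sub_zero]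
  rw [this]
  have hexp : (1:ℝ) ≤ Real.exp ((n:ℝ)/2) := Real.one_le_exp (by positivity)
  have hna : (0:ℝ) ≤ ‖a‖ := norm_nonneg a
  have h1 : (n:ℝ) * ‖a‖ ≤ (‖a‖ + 1) * ((n:ℝ)+1) ^ 1 := by
    rw [pow_one]
    have : ‖a‖ = ‖a‖ := rfl
    nlinarith
  have h2 : (0:ℝ) ≤ (‖a‖ + 1) * ((n:ℝ)+1) ^ 1 := by positivity
  nlinarith [mul_le_mul_of_nonneg_left hexp h2]

lemma memRw_Pop {f : ℝ → ℂ} (hfc : Continuous f) (hf : memRw f) : memRw (Pop f) := by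
  rw [memRw_nat_iff] at hf ⊢
  obtain ⟨_, k, c₁, hc₁, hb⟩ := hf
  refine ⟨(contPop hfc).continuousOn, k + 1, c₁, hc₁, fun n hn => ?_⟩
  have h0n : (0:ℝ) ≤ (n:ℝ) := Nat.cast_nonneg n
  have key : (∫ s in (0:ℝ)..(n:ℝ), ‖Pop f s‖)
      ≤ (∫ _ in (0:ℝ)..(n:ℝ), c₁ * ((n:ℝ) + 1) ^ k * Real.exp ((n:ℝ)/2)) := by
    apply intervalIntegral.integral_mono_on h0n
    · exact ((contPop hfc).norm.continuousOn).intervalIntegrable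
    · exact intervalIntegrable_const
    · intro x hx
      have h1 : ‖Pop f x‖ ≤ ∫ t in (0:ℝ)..x, ‖f t‖ :=
        intervalIntegral.norm_integral_le_integral_norm hx.1
      have h2 : (∫ t in (0:ℝ)..x, ‖f t‖) ≤ ∫ t in (0:ℝ)..(n:ℝ), ‖f t‖ := by
        rw [← intervalIntegral.integral_add_adjacent_intervals
          (hfc.norm.intervalIntegrable 0 x) (hfc.norm.intervalIntegrable x n)]
        have : (0:ℝ) ≤ ∫ t in x..(n:ℝ), ‖f t‖ :=
          intervalIntegral.integral_nonneg hx.2 (fun u _ => norm_nonneg _)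
        linarith
      exact h1.trans (h2.trans (hb n hn))
  rw [intervalIntegral.integral_const, smul_eq_mul, sub_zero] at key
  refine key.trans ?_
  have h1 : (n:ℝ) ≤ (n:ℝ) + 1 := by linarith
  have hexp : (0:ℝ) < Real.exp ((n:ℝ)/2) := Real.exp_pos _
  have hp : (0:ℝ) ≤ ((n:ℝ)+1) ^ k := by positivity
  calc (n:ℝ) * (c₁ * ((n:ℝ) + 1) ^ k * Real.exp ((n:ℝ)/2))
      ≤ ((n:ℝ)+1) * (c₁ * ((n:ℝ) + 1) ^ k * Real.exp ((n:ℝ)/2)) := by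
        apply mul_le_mul_of_nonneg_right h1
        positivity
    _ = c₁ * ((n:ℝ) + 1) ^ (k+1) * Real.exp ((n:ℝ)/2) := by ring
  
lemma memRw_Lop {f : ℝ → ℂ} (hfc : Continuous f) (hf : memRw f) : memRw (Lop f) := by
  have := memRw_add hf (memRw_neg (memRw_Pop hfc hf))
  apply memRw_congr (f := fun x => f x + -Pop f x) _ this
  intro x _
  simp [Lop, sub_eq_add_neg]


/-- `(1 + D)⁻¹ p`. -/
def resolv (p : ℂ[X]) : ℂ[X] :=
  ∑ i ∈ Finset.range (p.natDegree + 1), ((-1:ℂ)^i) • (Polynomial.derivative^[i] p)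

lemma resolv_add_derivative (p : ℂ[X]) :
    resolv p + Polynomial.derivative (resolv p) = p := by
  unfold resolv
  rw [map_sum]
  rw [← Finset.sum_add_distrib]
  have : ∀ i ∈ Finset.range (p.natDegree + 1),
      ((-1:ℂ)^i) • (Polynomial.derivative^[i] p)
        + Polynomial.derivative (((-1:ℂ)^i) • (Polynomial.derivative^[i] p))
      = (fun j => ((-1:ℂ)^j) • (Polynomial.derivative^[j] p)) i
        - (fun j => ((-1:ℂ)^j) • (Polynomial.derivative^[j] p)) (i+1) := by
    intro i _
    simp only [LinearMap.map_smul, ← Function.iterate_succ_apply' Polynomial.derivative]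
    rw [pow_succ]
    simp only [mul_neg_one, neg_smul, sub_neg_eq_add]
  rw [Finset.sum_congr rfl this, Finset.sum_range_sub']
  simp only [pow_zero, one_smul, Function.iterate_zero_apply]
  rw [Polynomial.iterate_derivative_eq_zero (Nat.lt_succ_self _)]
  simp

lemma degree_iterate_derivative_le (p : ℂ[X]) (i : ℕ) :
    (Polynomial.derivative^[i] p).degree ≤ p.degree := by
  induction i with
  | zero => simp
  | succ n ih =>
      rw [Function.iterate_succ_apply']
      exact Polynomial.degree_derivative_le.trans ih

lemma degree_resolv_lt {p : ℂ[X]} {m : ℕ} (h : p.degree < (m:ℕ)) :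
    (resolv p).degree < (m : ℕ) := by
  unfold resolv
  apply lt_of_le_of_lt (Polynomial.degree_sum_le _ _)
  rw [Finset.sup_lt_iff (by exact lt_of_le_of_lt bot_le h)]
  intro i _
  exact lt_of_le_of_lt ((Polynomial.degree_smul_le _ _).trans (degree_iterate_derivative_le p i)) h

lemma withBot_lt_succ {b : WithBot ℕ} {m : ℕ} (h : b < ((m+1 : ℕ) : WithBot ℕ)) :
    b ≤ (m : ℕ) := by
  induction b using WithBot.recBotCoe with
  | bot => exact bot_le
  | coe n =>
      simp only [Nat.cast_withBot, WithBot.coe_lt_coe] at h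
      simp only [Nat.cast_withBot, WithBot.coe_le_coe]
      exact Nat.lt_succ_iff.mp h

lemma degree_derivative_lt_of_lt {r : ℂ[X]} {m : ℕ} (h : r.degree < ((m+1 : ℕ) : WithBot ℕ)) :
    (Polynomial.derivative r).degree < (m : ℕ) := by
  by_cases hr : r = 0
  · simp only [hr, map_zero, Polynomial.degree_zero]
    exact lt_of_le_of_lt bot_le (by exact_mod_cast WithBot.bot_lt_coe m)
  · exact lt_of_lt_of_le (Polynomial.degree_derivative_lt hr) (withBot_lt_succ h)

/-- Antiderivative of a polynomial. -/
def pAntideriv (q : ℂ[X]) : ℂ[X] :=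
  q.sum fun n a => Polynomial.C (a / (n+1)) * Polynomial.X^(n+1)

lemma derivative_pAntideriv (q : ℂ[X]) :
    Polynomial.derivative (pAntideriv q) = q := by
  unfold pAntideriv
  rw [Polynomial.sum, map_sum]
  have : ∀ n ∈ q.support,
      Polynomial.derivative (Polynomial.C (q.coeff n / (n+1)) * Polynomial.X^(n+1))
        = Polynomial.C (q.coeff n) * Polynomial.X^n := by
    intro n _
    rw [Polynomial.derivative_C_mul_X_pow]
    have hne : ((n:ℂ)+1) ≠ 0 := Nat.cast_add_one_ne_zero n
    have h1 : (q.coeff n / ((n:ℂ)+1)) * ((n+1 : ℕ) : ℂ) = q.coeff n := by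
      push_cast
      rw [div_mul_cancel₀ _ hne]
    rw [h1, Nat.add_sub_cancel]
  rw [Finset.sum_congr rfl this]
  exact Polynomial.sum_C_mul_X_pow_eq q

lemma degree_pAntideriv_lt {q : ℂ[X]} {m : ℕ} (h : q.degree < (m:ℕ)) :
    (pAntideriv q).degree < ((m+1 : ℕ) : WithBot ℕ) := by
  unfold pAntideriv
  rw [Polynomial.sum]
  apply lt_of_le_of_lt (Polynomial.degree_sum_le _ _)
  rw [Finset.sup_lt_iff (by exact_mod_cast WithBot.bot_lt_coe (m+1))]
  intro n hn
  apply lt_of_le_of_lt (Polynomial.degree_C_mul_X_pow_le _ _)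
  have h1 : (n : WithBot ℕ) ≤ q.degree := Polynomial.le_degree_of_ne_zero
    (Polynomial.mem_support_iff.mp hn)
  have h2 : (n : WithBot ℕ) < (m : ℕ) := lt_of_le_of_lt h1 h
  have h3 : n < m := by exact_mod_cast h2
  exact_mod_cast Nat.succ_lt_succ h3

lemma hasDerivAt_polyExp (R : ℂ[X]) (x : ℝ) :
    HasDerivAt (fun t : ℝ => R.eval (t:ℂ) * Complex.exp (t:ℂ))
      ((R + Polynomial.derivative R).eval (x:ℂ) * Complex.exp (x:ℂ)) x := by
  have h1 : HasDerivAt (fun t : ℝ => R.eval (t:ℂ)) ((Polynomial.derivative R).eval (x:ℂ)) x :=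
    (R.hasDerivAt (x:ℂ)).comp_ofReal
  have h2 : HasDerivAt (fun t : ℝ => Complex.exp (t:ℂ)) (Complex.exp (x:ℂ)) x :=
    (Complex.hasDerivAt_exp (x:ℂ)).comp_ofReal
  have := h1.mul h2
  refine this.congr_deriv ?_
  simp only [Polynomial.eval_add]
  ring

lemma Pop_polyExp (p : ℂ[X]) (x : ℝ) :
    Pop (fun t : ℝ => p.eval (t:ℂ) * Complex.exp (t:ℂ)) x
      = (resolv p).eval (x:ℂ) * Complex.exp (x:ℂ) - (resolv p).eval 0 := by
  have key : ∀ t ∈ Set.uIcc (0:ℝ) x,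
      HasDerivAt (fun t : ℝ => (resolv p).eval (t:ℂ) * Complex.exp (t:ℂ))
        (p.eval (t:ℂ) * Complex.exp (t:ℂ)) t := by
    intro t _
    have := hasDerivAt_polyExp (resolv p) t
    rwa [resolv_add_derivative p] at this
  have : Pop (fun t : ℝ => p.eval (t:ℂ) * Complex.exp (t:ℂ)) x
      = (resolv p).eval (x:ℂ) * Complex.exp (x:ℂ)
        - (resolv p).eval ((0:ℝ):ℂ) * Complex.exp ((0:ℝ):ℂ) := by
    exact intervalIntegral.integral_eq_sub_of_hasDerivAt key
      ((contPolyExp p).intervalIntegrable 0 x)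
  rw [this]
  norm_num


lemma aux_pow_exp (k : ℕ) {b : ℝ} (hb : 0 < b) {s : ℝ} (hs : 0 ≤ s) :
    (s+1)^k * Real.exp (-(b*s)) ≤ (k.factorial : ℝ) * Real.exp b * (1/b)^k := by
  have h1 : (b*(s+1))^k / (k.factorial : ℝ) ≤ Real.exp (b*(s+1)) :=
    Real.pow_div_factorial_le_exp _ (mul_nonneg hb.le (by linarith : (0:ℝ) ≤ s+1)) k
  have hfac : (0:ℝ) < (k.factorial : ℝ) := by exact_mod_cast k.factorial_pos
  have hbk : (0:ℝ) < b^k := pow_pos hb k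
  have h2 : (s+1)^k ≤ (k.factorial : ℝ) * Real.exp (b*(s+1)) / b^k := by
    rw [mul_pow, div_le_iff₀ hfac] at h1
    rw [le_div_iff₀ hbk]
    nlinarith
  have h3 : (s+1)^k * Real.exp (-(b*s))
      ≤ ((k.factorial : ℝ) * Real.exp (b*(s+1)) / b^k) * Real.exp (-(b*s)) :=
    mul_le_mul_of_nonneg_right h2 (Real.exp_pos _).le
  refine h3.trans_eq ?_
  rw [div_mul_eq_mul_div, mul_assoc, ← Real.exp_add,
    show b*(s+1) + -(b*s) = b by ring, one_div, inv_pow, div_eq_mul_inv, mul_assoc]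

lemma decay (k : ℕ) {b x t : ℝ} (hb : 0 < b) (hx : 0 ≤ x) (hxt : x ≤ t) :
    (t+2)^k * Real.exp (-(b*t))
      ≤ ((k.factorial : ℝ) * Real.exp b * (1/b)^k) * ((x+2)^k * Real.exp (-(b*x))) := by
  have hs : (0:ℝ) ≤ t - x := by linarith
  have h1 : (t+2) ≤ (x+2) * ((t-x)+1) := by nlinarith
  have h2 : (t+2)^k ≤ (x+2)^k * ((t-x)+1)^k := by
    rw [← mul_pow]
    exact pow_le_pow_left₀ (by linarith) h1 k
  have h3 := aux_pow_exp k hb hs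
  have h4 : Real.exp (-(b*t)) = Real.exp (-(b*(t-x))) * Real.exp (-(b*x)) := by
    rw [← Real.exp_add]; congr 1; ring
  calc (t+2)^k * Real.exp (-(b*t))
      ≤ ((x+2)^k * ((t-x)+1)^k) * Real.exp (-(b*t)) :=
        mul_le_mul_of_nonneg_right h2 (Real.exp_pos _).le
    _ = (((t-x)+1)^k * Real.exp (-(b*(t-x)))) * ((x+2)^k * Real.exp (-(b*x))) := by
        rw [h4]; ring
    _ ≤ ((k.factorial : ℝ) * Real.exp b * (1/b)^k) * ((x+2)^k * Real.exp (-(b*x))) :=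
        mul_le_mul_of_nonneg_right h3 (by positivity)

/-- From the integer bound, a bound for all real `x ≥ 0`. -/
lemma grow_bound {g : ℝ → ℂ} (hg : Continuous g) {k : ℕ} {c₁ : ℝ} (hc₁ : 0 ≤ c₁)
    (hb : ∀ n : ℕ, 1 ≤ n →
      (∫ s in (0:ℝ)..(n:ℝ), ‖g s‖) ≤ c₁ * ((n:ℝ) + 1) ^ k * Real.exp ((n:ℝ) / 2))
    {x : ℝ} (hx : 0 ≤ x) :
    (∫ s in (0:ℝ)..x, ‖g s‖) ≤ (c₁ * Real.exp (1/2)) * (x+2)^k * Real.exp (x/2) := by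
  set n : ℕ := max 1 ⌈x⌉₊ with hn
  have hn1 : 1 ≤ n := le_max_left _ _
  have hxn : x ≤ (n:ℝ) := by
    refine le_trans (Nat.le_ceil x) ?_
    exact_mod_cast le_max_right 1 ⌈x⌉₊
  have hnx : (n:ℝ) ≤ x + 1 := by
    rw [hn]
    have h1 : ((⌈x⌉₊:ℕ):ℝ) ≤ x + 1 := (Nat.ceil_lt_add_one hx).le
    have h2 : ((1:ℕ):ℝ) ≤ x + 1 := by norm_num; linarith
    have := max_le h2 h1
    refine le_trans ?_ this
    exact_mod_cast le_of_eq (Nat.cast_max ..)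
  have step1 : (∫ s in (0:ℝ)..x, ‖g s‖) ≤ ∫ s in (0:ℝ)..(n:ℝ), ‖g s‖ := by
    rw [← intervalIntegral.integral_add_adjacent_intervals
      (hg.norm.intervalIntegrable 0 x) (hg.norm.intervalIntegrable x n)]
    have : (0:ℝ) ≤ ∫ t in x..(n:ℝ), ‖g t‖ :=
      intervalIntegral.integral_nonneg hxn (fun u _ => norm_nonneg _)
    linarith
  refine step1.trans ((hb n hn1).trans ?_)
  have e1 : ((n:ℝ)+1)^k ≤ (x+2)^k := pow_le_pow_left₀ (by positivity) (by linarith) k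
  have e2 : Real.exp ((n:ℝ)/2) ≤ Real.exp (1/2) * Real.exp (x/2) := by
    rw [← Real.exp_add]
    exact Real.exp_le_exp.mpr (by linarith)
  calc c₁ * ((n:ℝ) + 1) ^ k * Real.exp ((n:ℝ) / 2)
      ≤ c₁ * (x+2)^k * (Real.exp (1/2) * Real.exp (x/2)) := by
        apply mul_le_mul (mul_le_mul_of_nonneg_left e1 hc₁) e2 (Real.exp_pos _).le
        positivity
    _ = (c₁ * Real.exp (1/2)) * (x+2)^k * Real.exp (x/2) := by ring

lemma integral_exp_half {x : ℝ} (hx : 0 ≤ x) :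
    (∫ t in (0:ℝ)..x, Real.exp (t/2)) ≤ 2 * Real.exp (x/2) := by
  have key : ∀ t ∈ Set.uIcc (0:ℝ) x,
      HasDerivAt (fun t : ℝ => 2 * Real.exp (t/2)) (Real.exp (t/2)) t := by
    intro t _
    have h1 : HasDerivAt (fun y : ℝ => y/2) (1/2 : ℝ) t := (hasDerivAt_id' (x := t)).div_const 2
    have h := (h1.exp).const_mul (2:ℝ)
    refine h.congr_deriv ?_
    ring
  have : (∫ t in (0:ℝ)..x, Real.exp (t/2)) = 2 * Real.exp (x/2) - 2 * Real.exp (0/2) :=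
    intervalIntegral.integral_eq_sub_of_hasDerivAt key
      ((Real.continuous_exp.comp (continuous_id.div_const 2)).intervalIntegrable 0 x)
  rw [this]
  norm_num

lemma integral_exp_negq {x y : ℝ} (hxy : x ≤ y) :
    (∫ t in x..y, Real.exp (-(t/4))) ≤ 4 * Real.exp (-(x/4)) := by
  have key : ∀ t ∈ Set.uIcc x y,
      HasDerivAt (fun t : ℝ => -4 * Real.exp (-(t/4))) (Real.exp (-(t/4))) t := by
    intro t _
    have h1 : HasDerivAt (fun y : ℝ => -(y/4)) (-(1/4) : ℝ) t := ((hasDerivAt_id' (x := t)).div_const 4).neg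
    have h := (h1.exp).const_mul (-4:ℝ)
    refine h.congr_deriv ?_
    ring
  have : (∫ t in x..y, Real.exp (-(t/4)))
      = -4 * Real.exp (-(y/4)) - (-4) * Real.exp (-(x/4)) :=
    intervalIntegral.integral_eq_sub_of_hasDerivAt key
      ((Real.continuous_exp.comp (continuous_id.div_const 4).neg).intervalIntegrable x y)
  rw [this]
  have := Real.exp_pos (-(y/4))
  linarith


lemma decay_half (k : ℕ) {x t : ℝ} (hx : 0 ≤ x) (hxt : x ≤ t) :
    (t+2)^k * Real.exp (-(t/2))
      ≤ ((k.factorial : ℝ) * Real.exp (1/2) * 2^k) * ((x+2)^k * Real.exp (-(x/2))) := by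
  have h := decay k (b := 1/2) (by norm_num) hx hxt
  rw [show -((1/2:ℝ)*t) = -(t/2) by ring, show -((1/2:ℝ)*x) = -(x/2) by ring,
    show (1/(1/2:ℝ)) = 2 by norm_num] at h
  exact h

lemma decay_quarter (k : ℕ) {x t : ℝ} (hx : 0 ≤ x) (hxt : x ≤ t) :
    (t+2)^k * Real.exp (-(t/4))
      ≤ ((k.factorial : ℝ) * Real.exp (1/4) * 4^k) * ((x+2)^k * Real.exp (-(x/4))) := by
  have h := decay k (b := 1/4) (by norm_num) hx hxt
  rw [show -((1/4:ℝ)*t) = -(t/4) by ring, show -((1/4:ℝ)*x) = -(x/4) by ring,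
    show (1/(1/4:ℝ)) = 4 by norm_num] at h
  exact h

lemma tail_bound {g : ℝ → ℂ} (hg : Continuous g) (k : ℕ) {c₂ : ℝ} (hc₂ : 0 ≤ c₂)
    (hG : ∀ x : ℝ, 0 ≤ x → (∫ s in (0:ℝ)..x, ‖g s‖) ≤ c₂ * (x+2)^k * Real.exp (x/2)) :
    ∃ C : ℝ, 0 ≤ C ∧ ∀ x y : ℝ, 0 ≤ x → x ≤ y →
      (∫ t in x..y, Real.exp (-t) * ‖g t‖) ≤ C * ((x+2)^k * Real.exp (-(x/2))) := by
  set Mh : ℝ := (k.factorial : ℝ) * Real.exp (1/2) * 2^k with hMh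
  set Mq : ℝ := (k.factorial : ℝ) * Real.exp (1/4) * 4^k with hMq
  have hMh0 : 0 ≤ Mh := by positivity
  have hMq0 : 0 ≤ Mq := by positivity
  refine ⟨c₂ * Mh + 4 * (c₂ * Mq), by positivity, fun x y hx hxy => ?_⟩
  set G : ℝ → ℝ := fun u => ∫ s in (0:ℝ)..u, ‖g s‖ with hGdef
  have hGc : Continuous G :=
    intervalIntegral.continuous_primitive (fun a b => hg.norm.intervalIntegrable a b) 0
  have hGd : ∀ t : ℝ, HasDerivAt G ‖g t‖ t :=
    fun t => (hg.norm.integral_hasStrictDerivAt 0 t).hasDerivAt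
  have hGnn : ∀ t : ℝ, 0 ≤ t → 0 ≤ G t :=
    fun t ht => intervalIntegral.integral_nonneg ht (fun u _ => norm_nonneg _)
  have hexpd : ∀ t : ℝ, HasDerivAt (fun u : ℝ => Real.exp (-u)) (-Real.exp (-t)) t := by
    intro t
    have h1 : HasDerivAt (fun u : ℝ => -u) (-1 : ℝ) t := (hasDerivAt_id' (x := t)).neg
    have h := h1.exp
    convert h using 1
    ring
  have hHd : ∀ t : ℝ, HasDerivAt (fun u : ℝ => Real.exp (-u) * G u)
      (-Real.exp (-t) * G t + Real.exp (-t) * ‖g t‖) t :=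
    fun t => (hexpd t).mul (hGd t)
  have cexp : Continuous fun t : ℝ => Real.exp (-t) := Real.continuous_exp.comp continuous_neg
  have cont1 : Continuous fun t : ℝ => Real.exp (-t) * G t := cexp.mul hGc
  have cont2 : Continuous fun t : ℝ => Real.exp (-t) * ‖g t‖ := cexp.mul hg.norm
  have ftc : (∫ t in x..y, (-Real.exp (-t) * G t + Real.exp (-t) * ‖g t‖))
      = Real.exp (-y) * G y - Real.exp (-x) * G x := by
    apply intervalIntegral.integral_eq_sub_of_hasDerivAt (fun t _ => hHd t)
    exact (((cexp.neg).mul hGc).add cont2).intervalIntegrable x y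
  have split : (∫ t in x..y, (-Real.exp (-t) * G t + Real.exp (-t) * ‖g t‖))
      = -(∫ t in x..y, Real.exp (-t) * G t) + ∫ t in x..y, Real.exp (-t) * ‖g t‖ := by
    have e : (∫ t in x..y, (-Real.exp (-t) * G t + Real.exp (-t) * ‖g t‖))
        = ∫ t in x..y, (-(Real.exp (-t) * G t) + Real.exp (-t) * ‖g t‖) := by
      simp only [neg_mul]
    rw [e, intervalIntegral.integral_add (f := fun t => -(Real.exp (-t) * G t)) ((cont1.neg).intervalIntegrable x y)
      (cont2.intervalIntegrable x y), intervalIntegral.integral_neg]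
  have main_eq : (∫ t in x..y, Real.exp (-t) * ‖g t‖)
      = Real.exp (-y) * G y - Real.exp (-x) * G x + ∫ t in x..y, Real.exp (-t) * G t := by
    rw [split] at ftc
    linarith
  -- bound the boundary term
  have hy0 : 0 ≤ y := le_trans hx hxy
  have bdry : Real.exp (-y) * G y ≤ c₂ * Mh * ((x+2)^k * Real.exp (-(x/2))) := by
    have h1 : Real.exp (-y) * G y ≤ Real.exp (-y) * (c₂ * (y+2)^k * Real.exp (y/2)) :=
      mul_le_mul_of_nonneg_left (hG y hy0) (Real.exp_pos _).le
    have h2 : Real.exp (-y) * (c₂ * (y+2)^k * Real.exp (y/2))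
        = c₂ * ((y+2)^k * Real.exp (-(y/2))) := by
      have e : Real.exp (-y) * Real.exp (y/2) = Real.exp (-(y/2)) := by
        rw [← Real.exp_add]; congr 1; ring
      calc Real.exp (-y) * (c₂ * (y+2)^k * Real.exp (y/2))
          = (c₂ * (y+2)^k) * (Real.exp (-y) * Real.exp (y/2)) := by ring
        _ = c₂ * ((y+2)^k * Real.exp (-(y/2))) := by rw [e]; ring
    rw [h2] at h1
    refine h1.trans ?_
    have := decay_half k hx hxy
    calc c₂ * ((y+2)^k * Real.exp (-(y/2)))
        ≤ c₂ * (Mh * ((x+2)^k * Real.exp (-(x/2)))) := mul_le_mul_of_nonneg_left this hc₂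
      _ = c₂ * Mh * ((x+2)^k * Real.exp (-(x/2))) := by ring
  -- bound the integral term
  have intterm : (∫ t in x..y, Real.exp (-t) * G t)
      ≤ 4 * (c₂ * Mq) * ((x+2)^k * Real.exp (-(x/2))) := by
    have pt : ∀ t ∈ Set.Icc x y, Real.exp (-t) * G t
        ≤ (c₂ * Mq * ((x+2)^k * Real.exp (-(x/4)))) * Real.exp (-(t/4)) := by
      intro t ht
      have ht0 : 0 ≤ t := le_trans hx ht.1
      have h1 : Real.exp (-t) * G t ≤ Real.exp (-t) * (c₂ * (t+2)^k * Real.exp (t/2)) :=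
        mul_le_mul_of_nonneg_left (hG t ht0) (Real.exp_pos _).le
      have h2 : Real.exp (-t) * (c₂ * (t+2)^k * Real.exp (t/2))
          = c₂ * (((t+2)^k * Real.exp (-(t/4))) * Real.exp (-(t/4))) := by
        have e : Real.exp (-t) * Real.exp (t/2) = Real.exp (-(t/4)) * Real.exp (-(t/4)) := by
          rw [← Real.exp_add, ← Real.exp_add]; congr 1; ring
        calc Real.exp (-t) * (c₂ * (t+2)^k * Real.exp (t/2))
            = (c₂ * (t+2)^k) * (Real.exp (-t) * Real.exp (t/2)) := by ring
          _ = c₂ * (((t+2)^k * Real.exp (-(t/4))) * Real.exp (-(t/4))) := by rw [e]; ring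
      rw [h2] at h1
      refine h1.trans ?_
      have h3 := decay_quarter k hx ht.1
      have h4 : ((t+2)^k * Real.exp (-(t/4))) * Real.exp (-(t/4))
          ≤ (Mq * ((x+2)^k * Real.exp (-(x/4)))) * Real.exp (-(t/4)) :=
        mul_le_mul_of_nonneg_right h3 (Real.exp_pos _).le
      calc c₂ * (((t+2)^k * Real.exp (-(t/4))) * Real.exp (-(t/4)))
          ≤ c₂ * ((Mq * ((x+2)^k * Real.exp (-(x/4)))) * Real.exp (-(t/4))) :=
            mul_le_mul_of_nonneg_left h4 hc₂
        _ = (c₂ * Mq * ((x+2)^k * Real.exp (-(x/4)))) * Real.exp (-(t/4)) := by ring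
    have step : (∫ t in x..y, Real.exp (-t) * G t)
        ≤ ∫ t in x..y, (c₂ * Mq * ((x+2)^k * Real.exp (-(x/4)))) * Real.exp (-(t/4)) := by
      apply intervalIntegral.integral_mono_on hxy (cont1.intervalIntegrable x y)
        ((Continuous.intervalIntegrable (continuous_const.mul
          (Real.continuous_exp.comp (continuous_id.div_const 4).neg)) x y)) pt
    refine step.trans ?_
    rw [intervalIntegral.integral_const_mul]
    have h5 := integral_exp_negq hxy
    have hconst : (0:ℝ) ≤ c₂ * Mq * ((x+2)^k * Real.exp (-(x/4))) := by positivity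
    calc (c₂ * Mq * ((x+2)^k * Real.exp (-(x/4)))) * ∫ t in x..y, Real.exp (-(t/4))
        ≤ (c₂ * Mq * ((x+2)^k * Real.exp (-(x/4)))) * (4 * Real.exp (-(x/4))) :=
          mul_le_mul_of_nonneg_left h5 hconst
      _ = 4 * (c₂ * Mq) * ((x+2)^k * (Real.exp (-(x/4)) * Real.exp (-(x/4)))) := by ring
      _ = 4 * (c₂ * Mq) * ((x+2)^k * Real.exp (-(x/2))) := by
          rw [← Real.exp_add, show -(x/4) + -(x/4) = -(x/2) by ring]
  have hGx0 : 0 ≤ Real.exp (-x) * G x := mul_nonneg (Real.exp_pos _).le (hGnn x hx)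
  rw [main_eq]
  have := bdry
  have := intterm
  nlinarith

lemma exists_lim {B : ℝ → ℂ} (k : ℕ) {C : ℝ} (hC : 0 ≤ C)
    (hbd : ∀ x y : ℝ, 0 ≤ x → x ≤ y → ‖B y - B x‖ ≤ C * ((x+2)^k * Real.exp (-(x/2)))) :
    ∃ A : ℂ, ∀ x : ℝ, 0 ≤ x → ‖B x - A‖ ≤ C * ((x+2)^k * Real.exp (-(x/2))) := by
  set b : ℕ → ℝ := fun N => 2 * (C * (((N:ℝ)+2)^k * Real.exp (-((N:ℝ)/2)))) with hb
  have hcauchy : CauchySeq (fun n : ℕ => B n) := by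
    apply cauchySeq_of_le_tendsto_0 b
    · intro n m N hn hm
      have h1 := hbd N n (Nat.cast_nonneg N) (by exact_mod_cast hn)
      have h2 := hbd N m (Nat.cast_nonneg N) (by exact_mod_cast hm)
      have h3 : dist (B n) (B m) ≤ ‖B n - B N‖ + ‖B m - B N‖ := by
        rw [dist_eq_norm]
        calc ‖B n - B m‖ = ‖(B n - B N) - (B m - B N)‖ := by ring_nf
          _ ≤ ‖B n - B N‖ + ‖B m - B N‖ := norm_sub_le _ _
      have hbN : b N = 2 * (C * (((N:ℝ)+2)^k * Real.exp (-((N:ℝ)/2)))) := rfl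
      rw [hbN]
      linarith
    · have hbound : ∀ N : ℕ, b N
          ≤ (2 * C * (((k.factorial : ℝ) * Real.exp (1/4) * 4^k) * 2^k)) * Real.exp (-((N:ℝ)/4)) := by
        intro N
        have h := decay_quarter k (x := 0) (t := (N:ℝ)) le_rfl (Nat.cast_nonneg N)
        rw [show ((0:ℝ)+2) = 2 by norm_num, show -((0:ℝ)/4) = 0 by norm_num, Real.exp_zero,
          mul_one] at h
        have e1 : Real.exp (-((N:ℝ)/2)) = Real.exp (-((N:ℝ)/4)) * Real.exp (-((N:ℝ)/4)) := by
          rw [← Real.exp_add]; congr 1; ring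
        have h2 := mul_le_mul_of_nonneg_right h (Real.exp_pos (-((N:ℝ)/4))).le
        have h3 := mul_le_mul_of_nonneg_left h2 hC
        have hbN : b N = 2 * (C * (((N:ℝ)+2)^k * Real.exp (-((N:ℝ)/2)))) := rfl
        rw [hbN, e1]
        nlinarith [h3]
      have hexp0 : Tendsto (fun N : ℕ => Real.exp (-((N:ℝ)/4))) atTop (𝓝 0) := by
        apply Real.tendsto_exp_atBot.comp
        exact tendsto_neg_atTop_atBot.comp
          (Filter.Tendsto.atTop_div_const (by norm_num) tendsto_natCast_atTop_atTop)
      have h0 : ∀ N : ℕ, 0 ≤ b N := by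
        intro N
        have hbN : b N = 2 * (C * (((N:ℝ)+2)^k * Real.exp (-((N:ℝ)/2)))) := rfl
        rw [hbN]
        have : (0:ℝ) ≤ ((N:ℝ)+2)^k * Real.exp (-((N:ℝ)/2)) := by positivity
        nlinarith
      apply squeeze_zero h0 hbound
      have := hexp0.const_mul (2 * C * (((k.factorial : ℝ) * Real.exp (1/4) * 4^k) * 2^k))
      simpa using this
  obtain ⟨A, hA⟩ := cauchySeq_tendsto_of_complete hcauchy
  refine ⟨A, fun x hx => ?_⟩
  have hlim : Tendsto (fun n : ℕ => ‖B x - B n‖) atTop (𝓝 ‖B x - A‖) :=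
    ((tendsto_const_nhds).sub hA).norm
  apply le_of_tendsto hlim
  filter_upwards [eventually_ge_atTop ⌈x⌉₊] with n hn
  have hxn : x ≤ (n:ℝ) := le_trans (Nat.le_ceil x) (by exact_mod_cast hn)
  rw [norm_sub_rev]
  exact hbd x n hx hxn

lemma memRw_of_pointwise {ρ : ℝ → ℂ} (k : ℕ) {C : ℝ} (hC : 0 ≤ C)
    (hρ : ContinuousOn ρ (Set.Ici 0))
    (hb : ∀ x : ℝ, 0 ≤ x → ‖ρ x‖ ≤ C * ((x+2)^k * Real.exp (x/2))) : memRw ρ := by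
  rw [memRw_nat_iff]
  refine ⟨hρ, k, 2^(k+1) * C + 1, by positivity, fun n hn => ?_⟩
  have h0n : (0:ℝ) ≤ (n:ℝ) := Nat.cast_nonneg n
  have key : (∫ s in (0:ℝ)..(n:ℝ), ‖ρ s‖)
      ≤ ∫ s in (0:ℝ)..(n:ℝ), (C * ((n:ℝ)+2)^k) * Real.exp (s/2) := by
    apply intervalIntegral.integral_mono_on h0n (integrable_norm_on hρ le_rfl h0n)
      (Continuous.intervalIntegrable (continuous_const.mul
        (Real.continuous_exp.comp (continuous_id.div_const 2))) 0 n)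
    intro s hs
    refine (hb s hs.1).trans ?_
    have e1 : (s+2)^k ≤ ((n:ℝ)+2)^k := pow_le_pow_left₀ (by linarith [hs.1]) (by linarith [hs.2]) k
    calc C * ((s+2)^k * Real.exp (s/2)) ≤ C * (((n:ℝ)+2)^k * Real.exp (s/2)) := by
          apply mul_le_mul_of_nonneg_left _ hC
          exact mul_le_mul_of_nonneg_right e1 (Real.exp_pos _).le
      _ = (C * ((n:ℝ)+2)^k) * Real.exp (s/2) := by ring
  rw [intervalIntegral.integral_const_mul] at key
  refine key.trans ?_
  have h5 := integral_exp_half h0n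
  have hconst : (0:ℝ) ≤ C * ((n:ℝ)+2)^k := by positivity
  have step : (C * ((n:ℝ)+2)^k) * (∫ s in (0:ℝ)..(n:ℝ), Real.exp (s/2))
      ≤ (C * ((n:ℝ)+2)^k) * (2 * Real.exp ((n:ℝ)/2)) := mul_le_mul_of_nonneg_left h5 hconst
  refine (mul_le_mul_of_nonneg_left h5 hconst).trans ?_
  have e2 : ((n:ℝ)+2)^k ≤ 2^k * ((n:ℝ)+1)^k := by
    rw [← mul_pow]
    exact pow_le_pow_left₀ (by linarith) (by linarith) k
  have hexp : (0:ℝ) < Real.exp ((n:ℝ)/2) := Real.exp_pos _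
  have hpow : (0:ℝ) ≤ ((n:ℝ)+1)^k := by positivity
  calc (C * ((n:ℝ)+2)^k) * (2 * Real.exp ((n:ℝ)/2))
      ≤ (C * (2^k * ((n:ℝ)+1)^k)) * (2 * Real.exp ((n:ℝ)/2)) := by
        apply mul_le_mul_of_nonneg_right _ (by positivity)
        exact mul_le_mul_of_nonneg_left e2 hC
    _ = (2^(k+1) * C) * ((n:ℝ)+1)^k * Real.exp ((n:ℝ)/2) := by ring
    _ ≤ (2^(k+1) * C + 1) * ((n:ℝ)+1)^k * Real.exp ((n:ℝ)/2) := by nlinarith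


lemma memFw_step_forward {f : ℝ → ℂ} (hf : Continuous f) {m : ℕ} (h : memFw (m+1) f) :
    memFw m (Lop f) := by
  obtain ⟨_, p, hdeg, hr⟩ := h
  have hrc : Continuous (fun ℓ : ℝ => f ℓ - p.eval (ℓ:ℂ) * Complex.exp ℓ) :=
    hf.sub (contPolyExp p)
  have hqd : p - resolv p = Polynomial.derivative (resolv p) := by
    have h1 := resolv_add_derivative p
    linear_combination -h1
  set q : ℂ[X] := p - resolv p with hq
  have hqdeg : q.degree < (m:ℕ) := by
    rw [hqd]
    exact degree_derivative_lt_of_lt (degree_resolv_lt hdeg)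
  refine ⟨(contLop hf).continuousOn, q, hqdeg, ?_⟩
  have keyfun : (fun ℓ : ℝ => Lop f ℓ - q.eval (ℓ:ℂ) * Complex.exp ℓ)
      = fun ℓ : ℝ => (Lop (fun x : ℝ => f x - p.eval (x:ℂ) * Complex.exp x) ℓ)
          + (resolv p).eval 0 := by
    funext ℓ
    have hsplit : Pop f ℓ = Pop (fun x : ℝ => f x - p.eval (x:ℂ) * Complex.exp x) ℓ
        + Pop (fun x : ℝ => p.eval (x:ℂ) * Complex.exp x) ℓ := by
      simp only [Pop]
      rw [← intervalIntegral.integral_add (hrc.intervalIntegrable 0 ℓ)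
        ((contPolyExp p).intervalIntegrable 0 ℓ)]
      apply intervalIntegral.integral_congr
      intro t _
      ring
    have hPop := Pop_polyExp p ℓ
    simp only [Lop]
    rw [hsplit, hPop, hq]
    simp only [Polynomial.eval_sub]
    ring
  rw [keyfun]
  exact memRw_add (memRw_Lop hrc hr) (memRw_const _)

lemma memFw_step_backward {f : ℝ → ℂ} (hf : Continuous f) {m : ℕ} (h : memFw m (Lop f)) :
    memFw (m+1) f := by
  obtain ⟨_, q, hqdeg, hg⟩ := h
  set g : ℝ → ℂ := fun ℓ => Lop f ℓ - q.eval (ℓ:ℂ) * Complex.exp ℓ with hgdef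
  have hgc : Continuous g := (contLop hf).sub (contPolyExp q)
  obtain ⟨_, k, c₁, hc₁, hbnd⟩ := memRw_nat_iff.mp hg
  have hGb : ∀ x : ℝ, 0 ≤ x → (∫ s in (0:ℝ)..x, ‖g s‖)
      ≤ (c₁ * Real.exp (1/2)) * (x+2)^k * Real.exp (x/2) :=
    fun x hx => grow_bound hgc hc₁.le hbnd hx
  obtain ⟨C, hC0, hC⟩ := tail_bound hgc k
    (mul_nonneg hc₁.le (Real.exp_pos _).le) hGb
  have cexpC : Continuous fun t : ℝ => ((Real.exp (-t) : ℝ) : ℂ) :=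
    Complex.continuous_ofReal.comp (Real.continuous_exp.comp continuous_neg)
  set B : ℝ → ℂ := fun x => ∫ t in (0:ℝ)..x, ((Real.exp (-t) : ℝ) : ℂ) * g t with hBdef
  have hBc : Continuous B :=
    intervalIntegral.continuous_primitive (fun a b => (cexpC.mul hgc).intervalIntegrable a b) 0
  have hBdiff : ∀ x y : ℝ, 0 ≤ x → x ≤ y →
      ‖B y - B x‖ ≤ C * ((x+2)^k * Real.exp (-(x/2))) := by
    intro x y hx hxy
    have e1 : B y - B x = ∫ t in x..y, ((Real.exp (-t) : ℝ) : ℂ) * g t := by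
      rw [hBdef]
      simp only
      rw [← intervalIntegral.integral_add_adjacent_intervals (f := fun t => ((Real.exp (-t) : ℝ) : ℂ) * g t)
        ((cexpC.mul hgc).intervalIntegrable 0 x) ((cexpC.mul hgc).intervalIntegrable x y)]
      ring
    rw [e1]
    have e2 : ‖∫ t in x..y, ((Real.exp (-t) : ℝ) : ℂ) * g t‖
        ≤ ∫ t in x..y, ‖((Real.exp (-t) : ℝ) : ℂ) * g t‖ :=
      intervalIntegral.norm_integral_le_integral_norm hxy
    have e3 : (∫ t in x..y, ‖((Real.exp (-t) : ℝ) : ℂ) * g t‖)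
        = ∫ t in x..y, Real.exp (-t) * ‖g t‖ := by
      apply intervalIntegral.integral_congr
      intro t _
      simp [norm_mul, Complex.norm_exp, Real.norm_eq_abs,
        abs_of_pos (Real.exp_pos (-t))]
    rw [e3] at e2
    exact e2.trans (hC x y hx hxy)
  obtain ⟨A, hA⟩ := exists_lim k hC0 hBdiff
  set Q : ℂ[X] := pAntideriv q with hQdef
  set P : ℂ[X] := q + Q + Polynomial.C (A - Q.eval 0) with hPdef
  have hPdeg : P.degree < ((m+1:ℕ) : WithBot ℕ) := by
    have hmono : ((m:ℕ) : WithBot ℕ) ≤ ((m+1:ℕ) : WithBot ℕ) := by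
      simp only [Nat.cast_withBot, WithBot.coe_le_coe]
      exact Nat.le_succ m
    have h1 : q.degree < ((m+1:ℕ) : WithBot ℕ) := lt_of_lt_of_le hqdeg hmono
    have h2 : Q.degree < ((m+1:ℕ) : WithBot ℕ) := degree_pAntideriv_lt hqdeg
    have h3 : (Polynomial.C (A - Q.eval 0)).degree < ((m+1:ℕ) : WithBot ℕ) := by
      apply lt_of_le_of_lt Polynomial.degree_C_le
      exact_mod_cast Nat.succ_pos m
    apply lt_of_le_of_lt (Polynomial.degree_add_le _ _)
    apply max_lt _ h3
    exact lt_of_le_of_lt (Polynomial.degree_add_le _ _) (max_lt h1 h2)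
  refine ⟨hf.continuousOn, P, hPdeg, ?_⟩
  have expinv : ∀ x : ℝ, Complex.exp (x:ℂ) * ((Real.exp (-x):ℝ):ℂ) = 1 := by
    intro x
    rw [Complex.ofReal_exp, ← Complex.exp_add]
    push_cast
    simp
  have resolvent : ∀ x : ℝ,
      Pop f x = Complex.exp (x:ℂ) * ∫ t in (0:ℝ)..x, ((Real.exp (-t) : ℝ) : ℂ) * Lop f t := by
    intro x
    have hud : ∀ t : ℝ, HasDerivAt (Pop f) (f t) t :=
      fun t => (hf.integral_hasStrictDerivAt 0 t).hasDerivAt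
    have hed : ∀ t : ℝ, HasDerivAt (fun s : ℝ => ((Real.exp (-s) : ℝ) : ℂ))
        (((-Real.exp (-t) : ℝ) : ℂ)) t := by
      intro t
      have h2 : HasDerivAt (fun s : ℝ => -s) (-1 : ℝ) t := (hasDerivAt_id' (x := t)).neg
      have h1 : HasDerivAt (fun s : ℝ => Real.exp (-s)) (-Real.exp (-t)) t := by
        have := h2.exp
        convert this using 1
        ring
      exact h1.ofReal_comp
    have hprod : ∀ t : ℝ, HasDerivAt (fun s : ℝ => ((Real.exp (-s):ℝ):ℂ) * Pop f s)
        (((Real.exp (-t):ℝ):ℂ) * Lop f t) t := by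
      intro t
      have := (hed t).mul (hud t)
      refine this.congr_deriv ?_
      simp only [Lop]
      push_cast
      ring
    have ftc : (∫ t in (0:ℝ)..x, ((Real.exp (-t):ℝ):ℂ) * Lop f t)
        = ((Real.exp (-x):ℝ):ℂ) * Pop f x - ((Real.exp (-(0:ℝ)):ℝ):ℂ) * Pop f 0 := by
      apply intervalIntegral.integral_eq_sub_of_hasDerivAt (fun t _ => hprod t)
      exact (cexpC.mul (contLop hf)).intervalIntegrable 0 x
    have hu0 : Pop f 0 = 0 := intervalIntegral.integral_same
    rw [ftc, hu0, mul_zero, sub_zero, ← mul_assoc, expinv x, one_mul]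
  have hqder : ∀ t : ℝ, HasDerivAt (fun s : ℝ => Q.eval (s:ℂ)) (q.eval (t:ℂ)) t := by
    intro t
    have h1 : HasDerivAt (fun s : ℝ => Q.eval (s:ℂ)) ((Polynomial.derivative Q).eval (t:ℂ)) t :=
      (Q.hasDerivAt (t:ℂ)).comp_ofReal
    rwa [hQdef, derivative_pAntideriv] at h1
  have keyfun : (fun ℓ : ℝ => f ℓ - P.eval (ℓ:ℂ) * Complex.exp ℓ)
      = fun x : ℝ => g x + Complex.exp (x:ℂ) * (B x - A) := by
    funext x
    have h1 : f x = Lop f x + Pop f x := by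
      simp only [Lop]
      ring
    have h3 : (∫ t in (0:ℝ)..x, ((Real.exp (-t):ℝ):ℂ) * Lop f t)
        = (Q.eval (x:ℂ) - Q.eval 0) + B x := by
      have e1 : ∀ t ∈ Set.uIcc (0:ℝ) x, ((Real.exp (-t):ℝ):ℂ) * Lop f t
          = q.eval (t:ℂ) + ((Real.exp (-t):ℝ):ℂ) * g t := by
        intro t _
        have hl : Lop f t = g t + q.eval (t:ℂ) * Complex.exp (t:ℂ) := by
          rw [hgdef]
          ring
        rw [hl]
        have e3 : ((Real.exp (-t):ℝ):ℂ) * (g t + q.eval (t:ℂ) * Complex.exp (t:ℂ))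
            = q.eval (t:ℂ) * (Complex.exp (t:ℂ) * ((Real.exp (-t):ℝ):ℂ))
              + ((Real.exp (-t):ℝ):ℂ) * g t := by ring
        rw [e3, expinv t, mul_one]
      have cq : Continuous fun t : ℝ => q.eval (t:ℂ) :=
        q.continuous.comp Complex.continuous_ofReal
      rw [intervalIntegral.integral_congr e1,
        intervalIntegral.integral_add (g := fun t => ((Real.exp (-t) : ℝ) : ℂ) * g t) (cq.intervalIntegrable 0 x)
          ((cexpC.mul hgc).intervalIntegrable 0 x)]
      have e4 : (∫ t in (0:ℝ)..x, q.eval (t:ℂ)) = Q.eval (x:ℂ) - Q.eval (((0:ℝ):ℂ)) :=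
        intervalIntegral.integral_eq_sub_of_hasDerivAt (fun t _ => hqder t)
          (cq.intervalIntegrable 0 x)
      rw [e4, Complex.ofReal_zero]
    have h2 := resolvent x
    rw [h3] at h2
    calc f x - P.eval (x:ℂ) * Complex.exp (x:ℂ)
        = Lop f x + Pop f x - P.eval (x:ℂ) * Complex.exp (x:ℂ) := by rw [← h1]
      _ = g x + q.eval (x:ℂ) * Complex.exp (x:ℂ) + Pop f x
          - P.eval (x:ℂ) * Complex.exp (x:ℂ) := by
          rw [hgdef]; ring
      _ = g x + Complex.exp (x:ℂ) * (B x - A) := by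
          rw [h2, hPdef]
          simp only [Polynomial.eval_add, Polynomial.eval_C]
          ring
  rw [keyfun]
  refine memRw_add hg (memRw_of_pointwise k hC0 ?_ ?_)
  · exact (Complex.continuous_exp.comp Complex.continuous_ofReal).mul
      ((hBc).sub continuous_const) |>.continuousOn
  · intro x hx
    have e1 : ‖Complex.exp (x:ℂ) * (B x - A)‖ = Real.exp x * ‖B x - A‖ := by
      rw [norm_mul, Complex.norm_exp_ofReal]
    rw [e1]
    have := mul_le_mul_of_nonneg_left (hA x hx) (Real.exp_pos x).le
    refine this.trans ?_
    have e2 : Real.exp x * Real.exp (-(x/2)) = Real.exp (x/2) := by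
      rw [← Real.exp_add]; congr 1; ring
    refine le_of_eq ?_
    rw [← e2]
    ring

lemma memFw_zero_iff {f : ℝ → ℂ} : memFw 0 f ↔ memRw f := by
  constructor
  · rintro ⟨hc, p, hp, hr⟩
    have hp0 : p = 0 := by
      have h0 : p.degree < 0 := by exact_mod_cast hp
      rwa [Nat.WithBot.lt_zero_iff, Polynomial.degree_eq_bot] at h0
    simp only [hp0, Polynomial.eval_zero, zero_mul, sub_zero] at hr
    exact hr
  · intro h
    refine ⟨memRw_continuousOn h, 0, ?_, ?_⟩
    · rw [Polynomial.degree_zero]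
      exact_mod_cast WithBot.bot_lt_coe (0:ℕ)
    · simpa using h

lemma main' : ∀ (n : ℕ) (f : ℝ → ℂ), Continuous f →
    (memFw (n+1) f ↔ memRw (Lop^[n+1] f)) := by
  intro n
  induction n with
  | zero =>
      intro f hf
      rw [Function.iterate_one]
      exact ⟨fun h => memFw_zero_iff.mp (memFw_step_forward hf h),
        fun h => memFw_step_backward hf (memFw_zero_iff.mpr h)⟩
  | succ n ih =>
      intro f hf
      rw [Function.iterate_succ_apply]
      constructor
      · intro h
        exact (ih (Lop f) (contLop hf)).mp (memFw_step_forward hf h)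
      · intro h
        exact memFw_step_backward hf ((ih (Lop f) (contLop hf)).mpr h)

end FRWork

/-- for `m ≥ 1` and `f` continuous on `[0,∞)`,
`f ∈ 𝓕_w^m` if and only if `𝓛^m f ∈ 𝓡_w`. -/
theorem fw_iff_Lop_iter_mem_Rw (m : ℕ) (hm : 1 ≤ m) (f : ℝ → ℂ)
    (hf : ContinuousOn f (Set.Ici 0)) :
    memFw m f ↔ memRw (Lop^[m] f) := by
  obtain ⟨n, rfl⟩ : ∃ n, m = n + 1 := ⟨m - 1, (Nat.succ_pred_eq_of_pos hm).symm⟩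
  set F : ℝ → ℂ := fun x => f (max x 0) with hF
  have hFc : Continuous F :=
    hf.comp_continuous (continuous_id.max continuous_const) (fun x => le_max_right x 0)
  have heq : Set.EqOn f F (Set.Ici 0) := by
    intro x hx
    rw [hF]
    simp only
    rw [max_eq_left hx]
  constructor
  · intro h
    have h1 := (FRWork.main' n F hFc).mp (FRWork.memFw_congr heq h)
    exact FRWork.memRw_congr (FRWork.Lop_iter_eqOn heq.symm (n+1)) h1
  · intro h
    have h1 := (FRWork.main' n F hFc).mpr
      (FRWork.memRw_congr (FRWork.Lop_iter_eqOn heq (n+1)) h)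
    exact FRWork.memFw_congr heq.symm h1
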